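/- For a > 0, c > 0, every x ≥ 0 with u''(x) ≤ 0 (where u(x) = log₂(1+ax)/(x+c)) satisfies a(x+c)/(1+ax) + a²(x+c)²/(2(1+ax)²) ≥ ln(1+ax); in particular, this inequality holds for all x in [0, x̄], where x̄ is the unique maximizer of u on [0,∞). -/

import Mathlib

lemma stmt8_hasDerivAt_f (a c x : ℝ) (hA : 0 < 1 + a * x) (hD : 0 < x + c) :
    HasDerivAt (fun t => Real.logb 2 (1 + a * t) / (t + c))
      ((a * (x + c) / (1 + a * x) - Real.log (1 + a * x)) / ((x + c) ^ 2 * Real.log 2)) x := by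
  have h1 : HasDerivAt (fun t : ℝ => 1 + a * t) a x := by
    simpa using ((hasDerivAt_id x).const_mul a).const_add 1
  have hlog : HasDerivAt (fun t => Real.log (1 + a * t)) (a / (1 + a * x)) x := h1.log hA.ne'
  have hden : HasDerivAt (fun t : ℝ => t + c) 1 x := (hasDerivAt_id x).add_const c
  have h2 := (hlog.div_const (Real.log 2)).div hden hD.ne'
  have hl2 : Real.log 2 ≠ 0 := by
    have := Real.log_pos (by norm_num : (1:ℝ) < 2); linarith
  have heq : (fun t => Real.logb 2 (1 + a * t) / (t + c))
      = fun t => (Real.log (1 + a * t) / Real.log 2) / (t + c) := by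
    funext t; simp [Real.logb]
  rw [heq]
  refine h2.congr_deriv ?_
  field_simp

lemma stmt8_hasDerivAt_g1 (a c x : ℝ) (hA : 0 < 1 + a * x) (hD : 0 < x + c) :
    HasDerivAt (fun t => (a * (t + c) / (1 + a * t) - Real.log (1 + a * t)) / ((t + c) ^ 2 * Real.log 2))
      ((a * (1 - a * c) * (x + c) - 3 * a * (1 + a * x) * (x + c)
        + 2 * Real.log (1 + a * x) * (1 + a * x) ^ 2)
        / ((1 + a * x) ^ 2 * (x + c) ^ 3 * Real.log 2)) x := by
  have hl2 : (0:ℝ) < Real.log 2 := Real.log_pos (by norm_num)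
  have h1 : HasDerivAt (fun t : ℝ => 1 + a * t) a x := by
    simpa using ((hasDerivAt_id x).const_mul a).const_add 1
  have hlog : HasDerivAt (fun t => Real.log (1 + a * t)) (a / (1 + a * x)) x := h1.log hA.ne'
  have hden : HasDerivAt (fun t : ℝ => t + c) 1 x := (hasDerivAt_id x).add_const c
  have hnum1 : HasDerivAt (fun t : ℝ => a * (t + c)) a x := by
    simpa using hden.const_mul a
  have hfrac := hnum1.div h1 hA.ne'
  have hnum := hfrac.sub hlog
  have hpow : HasDerivAt (fun t : ℝ => (t + c) ^ 2 * Real.log 2) (2 * (x + c) * Real.log 2) x := by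
    have := (hden.pow 2).mul_const (Real.log 2)
    refine this.congr_deriv ?_; simp
  have hdpos : ((x + c) ^ 2 * Real.log 2) ≠ 0 := by positivity
  have h := hnum.div hpow hdpos
  refine h.congr_deriv ?_
  simp only [Pi.div_apply, Pi.sub_apply]; field_simp
  ring

/-- `φ t = a(t+c) - (1+at)·ln(1+at)`, auxiliary function for the second part. -/
lemma stmt8_hasDerivAt_phi (a c x : ℝ) (hA : 0 < 1 + a * x) :
    HasDerivAt (fun t => a * (t + c) - (1 + a * t) * Real.log (1 + a * t))
      (-(a * Real.log (1 + a * x))) x := by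
  have h1 : HasDerivAt (fun t : ℝ => 1 + a * t) a x := by
    simpa using ((hasDerivAt_id x).const_mul a).const_add 1
  have hlog : HasDerivAt (fun t => Real.log (1 + a * t)) (a / (1 + a * x)) x := h1.log hA.ne'
  have h2 : HasDerivAt (fun t : ℝ => a * (t + c)) a x := by
    simpa using ((hasDerivAt_id x).add_const c).const_mul a
  have h3 := h2.sub (h1.mul hlog)
  refine h3.congr_deriv ?_
  field_simp; ring

/-- Second-derivative characterization in the proof of Lemma 2: every `x ≥ 0`
with `u''(x) ≤ 0` (where `u(x) = log₂(1+ax)/(x+c)`) satisfies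
`a(x+c)/(1+ax) + a²(x+c)²/(2(1+ax)²) ≥ ln(1+ax)`; in particular this inequality
holds for all `x ∈ [0, x̄]`, `x̄` being the unique maximizer of `u` on `[0,∞)`. -/
theorem stmt_8 (a c : ℝ) (ha : 0 < a) (hc : 0 < c) (xb : ℝ)
    (hxb : xb ∈ Set.Ici (0 : ℝ))
    (hmax : IsMaxOn (fun t => Real.logb 2 (1 + a * t) / (t + c)) (Set.Ici 0) xb)
    (huniq : ∀ y ∈ Set.Ici (0 : ℝ),
      IsMaxOn (fun t => Real.logb 2 (1 + a * t) / (t + c)) (Set.Ici 0) y →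
      y = xb) :
    (∀ x : ℝ, 0 ≤ x →
      deriv (deriv (fun t => Real.logb 2 (1 + a * t) / (t + c))) x ≤ 0 →
      a * (x + c) / (1 + a * x) + a ^ 2 * (x + c) ^ 2 / (2 * (1 + a * x) ^ 2) ≥
        Real.log (1 + a * x)) ∧
    (∀ x : ℝ, 0 ≤ x → x ≤ xb →
      a * (x + c) / (1 + a * x) + a ^ 2 * (x + c) ^ 2 / (2 * (1 + a * x) ^ 2) ≥
        Real.log (1 + a * x)) := by
  have hl2 : (0:ℝ) < Real.log 2 := Real.log_pos (by norm_num)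
  -- the open set where everything is smooth
  have hopen : IsOpen {t : ℝ | 0 < 1 + a * t ∧ 0 < t + c} := by
    apply IsOpen.inter
    · exact isOpen_lt continuous_const (continuous_const.add (continuous_const.mul continuous_id))
    · exact isOpen_lt continuous_const (continuous_id.add continuous_const)
  constructor
  · -- Part 1
    intro x hx h2nd
    have hA : 0 < 1 + a * x := by nlinarith
    have hD : 0 < x + c := by linarith
    -- deriv f = g1 eventually near x
    have hmem : {t : ℝ | 0 < 1 + a * t ∧ 0 < t + c} ∈ nhds x :=
      hopen.mem_nhds ⟨hA, hD⟩
    have hev : deriv (fun t => Real.logb 2 (1 + a * t) / (t + c)) =ᶠ[nhds x]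
        (fun t => (a * (t + c) / (1 + a * t) - Real.log (1 + a * t)) / ((t + c) ^ 2 * Real.log 2)) := by
      filter_upwards [hmem] with t ht
      exact (stmt8_hasDerivAt_f a c t ht.1 ht.2).deriv
    have hder2 : deriv (deriv (fun t => Real.logb 2 (1 + a * t) / (t + c))) x
        = (a * (1 - a * c) * (x + c) - 3 * a * (1 + a * x) * (x + c)
          + 2 * Real.log (1 + a * x) * (1 + a * x) ^ 2)
          / ((1 + a * x) ^ 2 * (x + c) ^ 3 * Real.log 2) := by
      rw [hev.deriv_eq]
      exact (stmt8_hasDerivAt_g1 a c x hA hD).deriv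
    rw [hder2] at h2nd
    set L := Real.log (1 + a * x) with hL
    have hdenpos : (0:ℝ) < (1 + a * x) ^ 2 * (x + c) ^ 3 * Real.log 2 := by positivity
    have hNum : a * (1 - a * c) * (x + c) - 3 * a * (1 + a * x) * (x + c)
        + 2 * L * (1 + a * x) ^ 2 ≤ 0 := by
      by_contra hcon
      push_neg at hcon
      have := div_pos hcon hdenpos
      linarith
    have key : 2 * L * (1 + a * x) ^ 2
        ≤ 2 * a * (x + c) * (1 + a * x) + a ^ 2 * (x + c) ^ 2 := by nlinarith
    have heq : a * (x + c) / (1 + a * x) + a ^ 2 * (x + c) ^ 2 / (2 * (1 + a * x) ^ 2)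
        = (2 * a * (x + c) * (1 + a * x) + a ^ 2 * (x + c) ^ 2) / (2 * (1 + a * x) ^ 2) := by
      field_simp
    rw [ge_iff_le, heq, le_div_iff₀ (by positivity)]
    linarith
  · -- Part 2
    intro x hx hxxb
    have hA : 0 < 1 + a * x := by nlinarith
    have hD : 0 < x + c := by linarith
    have hAxb : 0 < 1 + a * xb := by nlinarith [hxb.out]
    -- φ xb ≥ 0
    have hphixb : 0 ≤ a * (xb + c) - (1 + a * xb) * Real.log (1 + a * xb) := by
      rcases eq_or_lt_of_le hxb.out with h0 | h0
      · rw [← h0]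
        simp [Real.log_one]
        positivity
      · -- xb is an interior maximizer: derivative vanishes
        have hloc : IsLocalMax (fun t => Real.logb 2 (1 + a * t) / (t + c)) xb :=
          hmax.isLocalMax (Filter.mem_of_superset (isOpen_Ioi.mem_nhds h0) Set.Ioi_subset_Ici_self)
        have hder := stmt8_hasDerivAt_f a c xb hAxb (by linarith)
        have hzero := hloc.hasDerivAt_eq_zero hder
        have hne : ((xb + c) ^ 2 * Real.log 2) ≠ 0 := by positivity
        have hd0 : a * (xb + c) / (1 + a * xb) = Real.log (1 + a * xb) := by
          rcases div_eq_zero_iff.mp hzero with h | h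
          · exact sub_eq_zero.mp h
          · exact absurd h hne
        rw [div_eq_iff hAxb.ne'] at hd0
        linarith
    -- φ is antitone on [0, xb], so φ x ≥ φ xb ≥ 0
    have hanti : AntitoneOn (fun t => a * (t + c) - (1 + a * t) * Real.log (1 + a * t))
        (Set.Icc 0 xb) := by
      apply antitoneOn_of_deriv_nonpos (convex_Icc 0 xb)
      · apply ContinuousOn.sub (by fun_prop)
        apply ContinuousOn.mul (by fun_prop)
        apply ContinuousOn.log (by fun_prop)
        intro t ht
        have : 0 < 1 + a * t := by nlinarith [ht.1]
        exact this.ne'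
      · intro t ht
        have ht' := interior_subset ht
        have hAt : 0 < 1 + a * t := by nlinarith [ht'.1]
        exact (stmt8_hasDerivAt_phi a c t hAt).differentiableAt.differentiableWithinAt
      · intro t ht
        rw [interior_Icc] at ht
        have hAt : 0 < 1 + a * t := by nlinarith [ht.1.le]
        rw [(stmt8_hasDerivAt_phi a c t hAt).deriv]
        have hL : 0 ≤ Real.log (1 + a * t) := Real.log_nonneg (by nlinarith [ht.1.le])
        nlinarith
    have hphix : 0 ≤ a * (x + c) - (1 + a * x) * Real.log (1 + a * x) := by
      have := hanti (Set.mem_Icc.mpr ⟨hx, hxxb⟩) (Set.mem_Icc.mpr ⟨hxb.out, le_refl xb⟩) hxxb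
      simpa using le_trans hphixb this
    -- conclude
    have h1 : Real.log (1 + a * x) ≤ a * (x + c) / (1 + a * x) := by
      rw [le_div_iff₀ hA]
      nlinarith
    have h2 : 0 ≤ a ^ 2 * (x + c) ^ 2 / (2 * (1 + a * x) ^ 2) := by positivity
    linarith
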